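/- For the two-qubit generator L_*(ρ) = -i[H,ρ] + σ₁⁻ ρ σ₁⁺ - ½{σ₁⁺σ₁⁻,ρ} with H = (ω/2)(σ₁⁺σ₂⁻+σ₁⁻σ₂⁺) and |ω| ≥ 1/2, the matrix ν with entries ν(|01⟩,|01⟩) = ν(|10⟩,|10⟩) = 1/2, ν(|01⟩,|10⟩) = x + i/(4ω), ν(|10⟩,|01⟩) = x - i/(4ω) (all other entries 0), where x ∈ ℝ with x² ≤ (4ω²-1)/(16ω²), is a positive semidefinite matrix of trace 1 satisfying p₀^⊥ L_*(ν) p₀^⊥ = -(1/2) ν, where p₀ = |00⟩⟨00|. -/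

import Mathlib

open Matrix Complex

noncomputable section

/-- `σ₁⁻ = |0⟩⟨1| ⊗ 1` on `ℂ² ⊗ ℂ²`, in the basis `|00⟩,|01⟩,|10⟩,|11⟩`. -/
def sigma1m : Matrix (Fin 4) (Fin 4) ℂ :=
  !![0,0,1,0; 0,0,0,1; 0,0,0,0; 0,0,0,0]

/-- `σ₂⁻ = 1 ⊗ |0⟩⟨1|` on `ℂ² ⊗ ℂ²`, in the basis `|00⟩,|01⟩,|10⟩,|11⟩`. -/
def sigma2m : Matrix (Fin 4) (Fin 4) ℂ :=
  !![0,1,0,0; 0,0,0,0; 0,0,0,1; 0,0,0,0]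

/-- Hamiltonian `H = (ω/2)(σ₁⁺σ₂⁻ + σ₁⁻σ₂⁺)`. -/
def Ham (ω : ℝ) : Matrix (Fin 4) (Fin 4) ℂ :=
  ((ω : ℂ) / 2) • (sigma1mᴴ * sigma2m + sigma1m * sigma2mᴴ)

/-- The two-qubit GKLS generator with decay on the first site only:
`L_*(ρ) = -i[H,ρ] + σ₁⁻ ρ σ₁⁺ - ½{σ₁⁺σ₁⁻, ρ}`. -/
def Lstar (ω : ℝ) (ρ : Matrix (Fin 4) (Fin 4) ℂ) : Matrix (Fin 4) (Fin 4) ℂ :=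
  (-Complex.I) • (Ham ω * ρ - ρ * Ham ω) + sigma1m * ρ * sigma1mᴴ
    - (1 / 2 : ℂ) • (sigma1mᴴ * sigma1m * ρ + ρ * (sigma1mᴴ * sigma1m))


/-- The projection `p₀^⊥ = 1 - |00⟩⟨00|`. -/
def pperp : Matrix (Fin 4) (Fin 4) ℂ :=
  1 - Matrix.single (0 : Fin 4) (0 : Fin 4) (1 : ℂ)

/-- The quasi-stationary state candidate. -/
def nuM (ω x : ℝ) : Matrix (Fin 4) (Fin 4) ℂ :=
  !![0,0,0,0;
     0, 1/2, (x : ℂ) + Complex.I / (4 * (ω : ℂ)), 0;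
     0, (x : ℂ) - Complex.I / (4 * (ω : ℂ)), 1/2, 0;
     0,0,0,0]

lemma ham_eq (ω : ℝ) : Ham ω = !![0,0,0,0; 0,0,(ω:ℂ)/2,0; 0,(ω:ℂ)/2,0,0; 0,0,0,0] := by
  ext i j
  fin_cases i <;> fin_cases j <;>
    simp [Ham, sigma1m, sigma2m, Matrix.mul_apply, Fin.sum_univ_four, Matrix.conjTranspose_apply,
      Matrix.vecMul, dotProduct, vecHead, vecTail]

lemma num_eq : sigma1mᴴ * sigma1m = !![0,0,0,0; 0,0,0,0; 0,0,1,0; 0,0,0,(1:ℂ)] := by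
  ext i j
  fin_cases i <;> fin_cases j <;>
    simp [sigma1m, Matrix.mul_apply, Fin.sum_univ_four, Matrix.conjTranspose_apply,
      Matrix.vecMul, dotProduct, vecHead, vecTail]

lemma pperp_eq : pperp = !![0,0,0,0; 0,1,0,0; 0,0,1,0; 0,0,0,(1:ℂ)] := by
  ext i j
  fin_cases i <;> fin_cases j <;>
    simp [pperp, Matrix.single, Matrix.one_apply] <;> rfl

lemma h1 (ω x : ℝ) : !![0,0,0,0; 0,0,(ω:ℂ)/2,0; 0,(ω:ℂ)/2,0,0; 0,0,0,0] * nuM ω x =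
    !![0,0,0,0;
       0, (ω:ℂ)/2 * ((x : ℂ) - Complex.I / (4 * (ω : ℂ))), (ω:ℂ)/4, 0;
       0, (ω:ℂ)/4, (ω:ℂ)/2 * ((x : ℂ) + Complex.I / (4 * (ω : ℂ))), 0;
       0,0,0,0] := by
  ext i j
  fin_cases i <;> fin_cases j <;>
    simp [nuM, Matrix.mul_apply, Fin.sum_univ_four, vecHead, vecTail] <;> ring_nf

lemma h2 (ω x : ℝ) : nuM ω x * !![0,0,0,0; 0,0,(ω:ℂ)/2,0; 0,(ω:ℂ)/2,0,0; 0,0,0,0] =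
    !![0,0,0,0;
       0, (ω:ℂ)/2 * ((x : ℂ) + Complex.I / (4 * (ω : ℂ))), (ω:ℂ)/4, 0;
       0, (ω:ℂ)/4, (ω:ℂ)/2 * ((x : ℂ) - Complex.I / (4 * (ω : ℂ))), 0;
       0,0,0,0] := by
  ext i j
  fin_cases i <;> fin_cases j <;>
    simp [nuM, Matrix.mul_apply, Fin.sum_univ_four, vecHead, vecTail] <;> ring_nf

lemma h3 (ω x : ℝ) : sigma1m * nuM ω x * sigma1mᴴ =
    !![1/2,0,0,0; 0,0,0,0; 0,0,0,0; 0,0,0,0] := by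
  have : sigma1m * nuM ω x =
      !![0, (x : ℂ) - Complex.I / (4 * (ω : ℂ)), 1/2, 0; 0,0,0,0; 0,0,0,0; 0,0,0,0] := by
    ext i j
    fin_cases i <;> fin_cases j <;>
      simp [nuM, sigma1m, Matrix.mul_apply, Fin.sum_univ_four, vecHead, vecTail]
  rw [this]
  ext i j
  fin_cases i <;> fin_cases j <;>
    simp [sigma1m, Matrix.mul_apply, Fin.sum_univ_four, Matrix.conjTranspose_apply,
      vecHead, vecTail]

lemma h4 (ω x : ℝ) : !![0,0,0,0; 0,0,0,0; 0,0,1,0; 0,0,0,(1:ℂ)] * nuM ω x =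
    !![0,0,0,0; 0,0,0,0; 0, (x : ℂ) - Complex.I / (4 * (ω : ℂ)), 1/2, 0; 0,0,0,0] := by
  ext i j
  fin_cases i <;> fin_cases j <;>
    simp [nuM, Matrix.mul_apply, Fin.sum_univ_four, vecHead, vecTail]

lemma h5 (ω x : ℝ) : nuM ω x * !![0,0,0,0; 0,0,0,0; 0,0,1,0; 0,0,0,(1:ℂ)] =
    !![0,0,0,0; 0,0,(x : ℂ) + Complex.I / (4 * (ω : ℂ)),0; 0, 0, 1/2, 0; 0,0,0,0] := by
  ext i j
  fin_cases i <;> fin_cases j <;>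
    simp [nuM, Matrix.mul_apply, Fin.sum_univ_four, vecHead, vecTail]

set_option maxHeartbeats 1000000 in
lemma lstar_eq (ω x : ℝ) (hωne : (ω:ℂ) ≠ 0) :
    Lstar ω (nuM ω x) =
    !![1/2,0,0,0;
       0, -1/4, -((x : ℂ) + Complex.I / (4 * (ω : ℂ)))/2, 0;
       0, -((x : ℂ) - Complex.I / (4 * (ω : ℂ)))/2, -1/4, 0;
       0,0,0,0] := by
  rw [Lstar, ham_eq, num_eq, h1, h2, h3, h4, h5]
  ext i j
  fin_cases i <;> fin_cases j <;>
    simp [Matrix.vecHead, Matrix.vecTail]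
  all_goals field_simp
  all_goals try ring
  all_goals try (left; norm_num)
  all_goals (simp [Complex.I_sq]; try ring)

set_option maxHeartbeats 1000000 in
lemma sandwich_eq (ω x : ℝ) (hωne : (ω:ℂ) ≠ 0) :
    pperp * Lstar ω (nuM ω x) * pperp = (-(1 / 2) : ℂ) • nuM ω x := by
  rw [lstar_eq ω x hωne, pperp_eq]
  have step : (!![0,0,0,0; 0,1,0,0; 0,0,1,0; 0,0,0,(1:ℂ)] : Matrix (Fin 4) (Fin 4) ℂ) *
      !![1/2,0,0,0;
       0, -1/4, -((x : ℂ) + Complex.I / (4 * (ω : ℂ)))/2, 0;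
       0, -((x : ℂ) - Complex.I / (4 * (ω : ℂ)))/2, -1/4, 0;
       0,0,0,0] =
      !![0,0,0,0;
       0, -1/4, -((x : ℂ) + Complex.I / (4 * (ω : ℂ)))/2, 0;
       0, -((x : ℂ) - Complex.I / (4 * (ω : ℂ)))/2, -1/4, 0;
       0,0,0,0] := by
    ext i j
    fin_cases i <;> fin_cases j <;>
      simp [Matrix.mul_apply, Fin.sum_univ_four, vecHead, vecTail]
  rw [step]
  ext i j
  fin_cases i <;> fin_cases j <;>
    simp [nuM, Matrix.mul_apply, Fin.sum_univ_four, vecHead, vecTail] <;> ring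

open scoped ComplexOrder in
/-- For `|ω| ≥ 1/2`, the family of matrices `ν` below consists of states
(quasi-stationary states) satisfying `p₀^⊥ L_*(ν) p₀^⊥ = -(1/2) ν`. -/
theorem qss_family_large_omega (ω : ℝ) (hω : 1 / 2 ≤ |ω|)
    (x : ℝ) (hx : x ^ 2 ≤ (4 * ω ^ 2 - 1) / (16 * ω ^ 2)) :
    let ν : Matrix (Fin 4) (Fin 4) ℂ :=
      !![0,0,0,0;
         0, 1/2, (x : ℂ) + Complex.I / (4 * (ω : ℂ)), 0;
         0, (x : ℂ) - Complex.I / (4 * (ω : ℂ)), 1/2, 0;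
         0,0,0,0]
    ν.PosSemidef ∧ ν.trace = 1 ∧
      pperp * Lstar ω ν * pperp = (-(1 / 2) : ℂ) • ν := by
  intro ν
  have hν : ν = nuM ω x := rfl
  have hω2 : (1/4 : ℝ) ≤ ω ^ 2 := by nlinarith [_root_.sq_abs ω, abs_nonneg ω]
  have hne : ω ≠ 0 := by intro h; rw [h] at hω2; norm_num at hω2
  have hωne : (ω : ℂ) ≠ 0 := Complex.ofReal_ne_zero.mpr hne
  have hω2' : (0:ℝ) < 16 * ω^2 := by nlinarith
  have ht : (0:ℝ) ≤ 1/2 - 2*(x^2 + 1/(16*ω^2)) := by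
    have h2 : 2*(x^2 + 1/(16*ω^2)) * (16*ω^2) ≤ (1/2) * (16*ω^2) := by
      have hinv : 1/(16*ω^2) * (16*ω^2) = 1 := by field_simp
      nlinarith [(le_div_iff₀ hω2').mp hx]
    nlinarith
  refine ⟨?_, ?_, ?_⟩
  · -- positive semidefiniteness via ν = Aᴴ * A
    obtain ⟨s, hsconj, hs, hsne⟩ :
        ∃ s : ℂ, (starRingEnd ℂ) s = s ∧ s * s = 2 ∧ s ≠ 0 := by
      refine ⟨((Real.sqrt 2 : ℝ) : ℂ), Complex.conj_ofReal _, ?_, ?_⟩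
      · rw [← Complex.ofReal_mul, Real.mul_self_sqrt (by norm_num)]; norm_num
      · simp [Real.sqrt_eq_zero']
    obtain ⟨d, hdconj, hdd⟩ :
        ∃ d : ℂ, (starRingEnd ℂ) d = d ∧
          d * d = ((1/2 - 2*(x^2 + 1/(16*ω^2)) : ℝ) : ℂ) := by
      refine ⟨((Real.sqrt (1/2 - 2*(x^2 + 1/(16*ω^2))) : ℝ) : ℂ), Complex.conj_ofReal _, ?_⟩
      rw [← Complex.ofReal_mul, Real.mul_self_sqrt ht]
    have key : ν =
        (!![0,0,0,0;
           0, s⁻¹, s * ((x : ℂ) + Complex.I / (4 * (ω : ℂ))), 0;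
           0, 0, d, 0;
           0,0,0,0] : Matrix (Fin 4) (Fin 4) ℂ)ᴴ *
        !![0,0,0,0;
           0, s⁻¹, s * ((x : ℂ) + Complex.I / (4 * (ω : ℂ))), 0;
           0, 0, d, 0;
           0,0,0,0] := by
      rw [hν]
      ext i j
      fin_cases i <;> fin_cases j <;>
        simp [nuM, Matrix.mul_apply, Fin.sum_univ_four, Matrix.conjTranspose_apply,
          vecHead, vecTail, Complex.conj_ofReal, _root_.map_add, _root_.map_mul,
          map_div₀, _root_.map_ofNat, map_inv₀, hsconj, hdconj]
      · field_simp; linear_combination hs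
      · field_simp
      · field_simp; ring
      · rw [mul_mul_mul_comm, hs, hdd]
        push_cast
        field_simp
        ring_nf
        simp [Complex.I_sq]
        try ring_nf
        try rw [← mul_pow, mul_inv_cancel₀ hωne, one_pow]
    rw [key]
    exact Matrix.posSemidef_conjTranspose_mul_self _
  · rw [hν]
    simp [nuM, Matrix.trace, Fin.sum_univ_four, Matrix.diag, vecHead, vecTail]
    norm_num
  · rw [hν]; exact sandwich_eq ω x hωne

end
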